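/- For real α and β > 0, the two-sided sum ∑_{n=−∞}^∞ πn·exp(−π²n²/(2β))·sin(πnα) equals 2·(β^{3/2}/√(2π))·∑_{n=−∞}^∞ exp(−(β/2)(2n+α)²)·(α+2n). -/

import Mathlib

open Real

open Complex HurwitzZeta in
private lemma stmt5_h1 (α β : ℝ) (hβ : 0 < β) :
    HasSum (fun n : ℤ ↦ π * n * Real.exp (-π ^ 2 * n ^ 2 / (2 * β)) * Real.sin (π * n * α))
      (π * sinKernel (↑(α / 2) : UnitAddCircle) (π / (2 * β))) := by
  have ht : 0 < π / (2 * β) := div_pos Real.pi_pos (by linarith)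
  have h := (Complex.hasSum_re (hasSum_int_sinKernel (α / 2) ht)).mul_left π
  rw [Complex.ofReal_re] at h
  refine h.congr_fun fun n ↦ ?_
  have harg : (2 * (π : ℂ) * I * ((α / 2 : ℝ) : ℂ) * (n : ℂ)) = ((π * n * α : ℝ) : ℂ) * I := by
    push_cast; ring
  have hz : (-I * (n : ℂ) * cexp (2 * π * I * ((α / 2 : ℝ) : ℂ) * n) *
      ((rexp (-π * (n : ℤ) ^ 2 * (π / (2 * β))) : ℝ) : ℂ))
      = ((n * Real.sin (π * n * α) * rexp (-π * n ^ 2 * (π / (2 * β))) : ℝ) : ℂ)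
        + ((-(n * Real.cos (π * n * α) * rexp (-π * n ^ 2 * (π / (2 * β)))) : ℝ) : ℂ) * I := by
    rw [harg, Complex.exp_mul_I]
    push_cast
    ring_nf
    simp only [Complex.I_sq]
    ring
  rw [hz]
  simp only [Complex.add_re, Complex.ofReal_re, Complex.mul_re, Complex.ofReal_im, Complex.I_re,
    Complex.I_im, mul_zero, mul_one, zero_sub, zero_mul, sub_zero]
  have hexp : -π * (n : ℝ) ^ 2 * (π / (2 * β)) = -π ^ 2 * n ^ 2 / (2 * β) := by
    field_simp
  rw [hexp]; ring

theorem stmt_5 (α β : ℝ) (hβ : 0 < β) :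
    ∑' n : ℤ, π * n * Real.exp (-π ^ 2 * n ^ 2 / (2 * β)) * Real.sin (π * n * α)
      = 2 * (β ^ ((3 : ℝ) / 2) / Real.sqrt (2 * π))
          * ∑' n : ℤ, Real.exp (-(β / 2) * (2 * n + α) ^ 2) * (α + 2 * n) := by
  have hx : (0 : ℝ) < 2 * β / π := div_pos (by linarith) pi_pos
  have h2 : HasSum (fun n : ℤ ↦ Real.exp (-(β / 2) * (2 * n + α) ^ 2) * (α + 2 * n))
      (2 * HurwitzZeta.oddKernel (↑(α / 2) : UnitAddCircle) (2 * β / π)) := by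
    refine ((HurwitzZeta.hasSum_int_oddKernel (α / 2) hx).mul_left 2).congr_fun fun n ↦ ?_
    have hexp : -π * ((n : ℝ) + α / 2) ^ 2 * (2 * β / π) = -(β / 2) * (2 * n + α) ^ 2 := by
      field_simp
    rw [hexp]; ring
  have hfe := HurwitzZeta.oddKernel_functional_equation (↑(α / 2) : UnitAddCircle) (2 * β / π)
  rw [show 1 / (2 * β / π) = π / (2 * β) by field_simp] at hfe
  have key : π * (2 * β / π) ^ ((3:ℝ)/2) = 2 * (β ^ ((3:ℝ)/2) / Real.sqrt (2 * π)) * 2 := by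
    rw [Real.div_rpow (by linarith) pi_pos.le, Real.mul_rpow (by norm_num) hβ.le,
      Real.sqrt_eq_rpow, Real.mul_rpow (by norm_num) pi_pos.le]
    have h2ne : (2:ℝ) ^ ((1:ℝ)/2) ≠ 0 := (Real.rpow_pos_of_pos two_pos _).ne'
    have hpne : (π:ℝ) ^ ((1:ℝ)/2) ≠ 0 := (Real.rpow_pos_of_pos pi_pos _).ne'
    have hpne3 : (π:ℝ) ^ ((3:ℝ)/2) ≠ 0 := (Real.rpow_pos_of_pos pi_pos _).ne'
    have h22 : (2:ℝ) ^ ((1:ℝ)/2) * 2 ^ ((3:ℝ)/2) = 4 := by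
      rw [← Real.rpow_add two_pos]; norm_num
    have hpp2 : π * π ^ ((1:ℝ)/2) = π ^ ((3:ℝ)/2) := by
      nth_rewrite 1 [← Real.rpow_one π]
      rw [← Real.rpow_add pi_pos]; norm_num
    field_simp
    linear_combination π * π ^ ((1:ℝ)/2) * h22 + 4 * hpp2
  have hX : ((2 * β / π) ^ ((3:ℝ)/2)) ≠ 0 := (Real.rpow_pos_of_pos hx _).ne'
  rw [(stmt5_h1 α β hβ).tsum_eq, h2.tsum_eq, hfe]
  set S := HurwitzZeta.sinKernel (↑(α / 2) : UnitAddCircle) (π / (2 * β)) with hS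
  have hrw : 2 * (β ^ ((3:ℝ)/2) / Real.sqrt (2 * π)) * (2 * (1 / (2 * β / π) ^ ((3:ℝ)/2) * S))
      = (2 * (β ^ ((3:ℝ)/2) / Real.sqrt (2 * π)) * 2) * S / (2 * β / π) ^ ((3:ℝ)/2) := by
    ring
  rw [hrw, ← key, mul_assoc, mul_comm ((2 * β / π) ^ ((3:ℝ)/2)) S, ← mul_assoc,
    mul_div_assoc, div_self hX, mul_one]
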